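/- (Proposition 4.1.) Let n, k be integers with 0 ≤ k ≤ n/2 and let I be the ideal of ℚ[x_1,...,x_n,t] described below. Regard the quotient ring ℚ[x_1,...,x_n,t]/I as a module over ℚ[t] via the inclusion t ↦ t. Then ℚ[x_1,...,x_n,t]/I is generated as a ℚ[t]-module by the residue classes of the squarefree monomials x_S := ∏_{j∈S} x_j, where S ranges over all subsets of {1,...,n} of cardinality ℓ with 0 ≤ ℓ ≤ k whose m-th smallest element is at least 2m for every 1 ≤ m ≤ ℓ (for S = ∅ the monomial is 1). -/

import Mathlib

open scoped BigOperators

/-- The variable `t` in `ℚ[x₁,…,xₙ,t] = MvPolynomial (Fin (n+1)) ℚ`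
(variable `0` is `t`, variable `i` is `xᵢ` for `1 ≤ i ≤ n`). -/
noncomputable def tP (n : ℕ) : MvPolynomial (Fin (n + 1)) ℚ :=
  MvPolynomial.X 0

/-- The variable `xᵢ` (for `1 ≤ i ≤ n`) of `ℚ[x₁,…,xₙ,t]`, with the
convention `x₀ = 0` (and `xᵢ = 0` out of range). -/
noncomputable def xP (n : ℕ) (i : ℕ) : MvPolynomial (Fin (n + 1)) ℚ :=
  if h : 1 ≤ i ∧ i ≤ n then MvPolynomial.X ⟨i, by omega⟩ else 0

/-- The ideal `I` of `ℚ[x₁,…,xₙ,t]` generated by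
(i) `∑ᵢ xᵢ - (n(n+1)/2)·t`;
(ii) `(xᵢ + xᵢ₋₁ - (n-k+i)·t)·(xᵢ - xᵢ₋₁ - t)` for `1 ≤ i ≤ n`;
(iii) `∏_{j=0}^{k} (x_{i_j} - (i_j - j)·t)` for all `1 ≤ i₀ < ⋯ < iₖ ≤ n`. -/
noncomputable def Iid (n k : ℕ) : Ideal (MvPolynomial (Fin (n + 1)) ℚ) :=
  Ideal.span
    ({(∑ i ∈ Finset.Icc 1 n, xP n i) -
        MvPolynomial.C (((n : ℚ) * ((n : ℚ) + 1)) / 2) * tP n} ∪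
      {p | ∃ i, 1 ≤ i ∧ i ≤ n ∧
        p = (xP n i + xP n (i - 1) - MvPolynomial.C ((n : ℚ) - (k : ℚ) + (i : ℚ)) * tP n) *
              (xP n i - xP n (i - 1) - tP n)} ∪
      {p | ∃ m : Fin (k + 1) → ℕ, StrictMono m ∧ 1 ≤ m 0 ∧ m (Fin.last k) ≤ n ∧
        p = ∏ j : Fin (k + 1),
              (xP n (m j) - MvPolynomial.C ((m j : ℚ) - ((j : ℕ) : ℚ)) * tP n)})

/-- `S` is the bottom row of a standard tableau on a two-row shape `(n-ℓ,ℓ)`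
with `ℓ = S.card ≤ k`: its `m`-th smallest element is at least `2m`. -/
def goodS (n k : ℕ) (S : Finset ℕ) : Prop :=
  S ⊆ Finset.Icc 1 n ∧ S.card ≤ k ∧
    ∀ j ∈ S, 2 * (S.filter fun a => a ≤ j).card ≤ j


open Finset

namespace Prop41

noncomputable section

abbrev FV : Type := Finset ℕ →₀ ℚ

def eV (S : Finset ℕ) : FV := Finsupp.single S 1

def Ue (m : ℕ) (T : Finset ℕ) : FV := ∑ i ∈ Icc 1 m \ T, eV (insert i T)

def Dvec (S : Finset ℕ) : FV := ∑ j ∈ S, eV (S.erase j)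

def Umap (m : ℕ) : FV →ₗ[ℚ] FV := Finsupp.linearCombination ℚ (Ue m)
def Dmap : FV →ₗ[ℚ] FV := Finsupp.linearCombination ℚ Dvec

lemma Umap_eV (m : ℕ) (S : Finset ℕ) : Umap m (eV S) = Ue m S := by
  simp [Umap, eV, Finsupp.linearCombination_single]
lemma Dmap_eV (S : Finset ℕ) : Dmap (eV S) = Dvec S := by
  simp [Dmap, eV, Finsupp.linearCombination_single]

def dot (f g : FV) : ℚ := f.sum fun a x => x * g a

lemma dot_eq_union (f g : FV) : dot f g = ∑ a ∈ f.support ∪ g.support, f a * g a := by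
  rw [dot, Finsupp.sum]
  exact Finset.sum_subset subset_union_left
    (fun a _ ha => by simp [Finsupp.notMem_support_iff.mp ha])

lemma dot_comm (f g : FV) : dot f g = dot g f := by
  rw [dot_eq_union, dot_eq_union, union_comm]
  exact Finset.sum_congr rfl fun a _ => mul_comm _ _

lemma dot_add_left (f g h : FV) : dot (f + g) h = dot f h + dot g h :=
  Finsupp.sum_add_index' (fun a => zero_mul _) (fun a b c => add_mul b c _)

lemma dot_smul_left (c : ℚ) (f g : FV) : dot (c • f) g = c * dot f g := by
  rw [dot, Finsupp.sum_smul_index (fun i => zero_mul (g i)), dot, Finsupp.mul_sum]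
  exact Finsupp.sum_congr fun a _ => by ring

/-- `dot` as a linear map in its first argument. -/
def dotL (g : FV) : FV →ₗ[ℚ] ℚ where
  toFun f := dot f g
  map_add' f f' := dot_add_left f f' g
  map_smul' c f := dot_smul_left c f g

lemma dot_sum_left {ι : Type*} (s : Finset ι) (f : ι → FV) (g : FV) :
    dot (∑ i ∈ s, f i) g = ∑ i ∈ s, dot (f i) g :=
  map_sum (dotL g) f s

lemma dot_single_one_left (A : Finset ℕ) (g : FV) : dot (eV A) g = g A := by
  rw [eV, dot, Finsupp.sum_single_index (zero_mul (g A)), one_mul]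

lemma eV_apply (A B : Finset ℕ) : eV A B = if A = B then (1:ℚ) else 0 := by
  rw [eV, Finsupp.single_apply]

lemma dot_eV_eV (A B : Finset ℕ) : dot (eV A) (eV B) = if B = A then (1:ℚ) else 0 := by
  rw [dot_single_one_left, eV_apply]

lemma dot_self_nonneg (f : FV) : 0 ≤ dot f f :=
  Finset.sum_nonneg fun a _ => mul_self_nonneg _

lemma dot_self_pos (f : FV) (h : f ≠ 0) : 0 < dot f f := by
  obtain ⟨a, ha⟩ := Finsupp.support_nonempty_iff.mpr h
  exact Finset.sum_pos' (fun a _ => mul_self_nonneg _)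
    ⟨a, ha, mul_self_pos.mpr (Finsupp.mem_support_iff.mp ha)⟩

/-- The key counting identity behind adjointness of `U` and `D`. -/
lemma key_count (m : ℕ) (T S : Finset ℕ) (hT : T ⊆ Icc 1 m) :
    ∑ j ∈ T, (if T.erase j = S then (1:ℚ) else 0) =
    ∑ i ∈ Icc 1 m \ S, (if insert i S = T then (1:ℚ) else 0) := by
  by_cases hsub : S ⊆ T ∧ T.card = S.card + 1
  · obtain ⟨hST, hcard⟩ := hsub
    obtain ⟨x, hx⟩ : ∃ x, T \ S = {x} := card_eq_one.mp (by rw [card_sdiff_of_subset hST]; omega)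
    have hxT : x ∈ T := (mem_sdiff.mp (hx ▸ mem_singleton_self x)).1
    have hxS : x ∉ S := (mem_sdiff.mp (hx ▸ mem_singleton_self x)).2
    have hmemx : ∀ y, y ∈ T → y ∉ S → y = x := by
      intro y hy hyS
      have : y ∈ T \ S := mem_sdiff.mpr ⟨hy, hyS⟩
      rw [hx, mem_singleton] at this; exact this
    have h1 : ∀ j ∈ T, (T.erase j = S) ↔ j = x := by
      intro j hj
      constructor
      · intro he
        refine hmemx j hj (fun hjS => ?_)
        rw [← he] at hjS; exact (mem_erase.mp hjS).1 rfl
      · rintro rfl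
        apply Finset.ext
        intro y
        simp only [mem_erase]
        constructor
        · rintro ⟨hyx, hyT⟩
          by_contra hyS
          exact hyx (hmemx y hyT hyS)
        · intro hyS
          exact ⟨fun he => hxS (he ▸ hyS), hST hyS⟩
    have h2 : ∀ i ∈ Icc 1 m \ S, (insert i S = T) ↔ i = x := by
      intro i hi
      have hiS : i ∉ S := (mem_sdiff.mp hi).2
      constructor
      · intro he
        exact hmemx i (he ▸ mem_insert_self i S) hiS
      · rintro rfl
        apply eq_of_subset_of_card_le
        · exact insert_subset hxT hST
        · rw [card_insert_of_notMem hxS]; omega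
    have l1 : (∑ j ∈ T, if T.erase j = S then (1:ℚ) else 0) = ∑ j ∈ T, if j = x then (1:ℚ) else 0 :=
      Finset.sum_congr rfl fun j hj => if_congr (h1 j hj) rfl rfl
    have l2 : (∑ i ∈ Icc 1 m \ S, if insert i S = T then (1:ℚ) else 0)
        = ∑ i ∈ Icc 1 m \ S, if i = x then (1:ℚ) else 0 :=
      Finset.sum_congr rfl fun i hi => if_congr (h2 i hi) rfl rfl
    rw [l1, l2, Finset.sum_ite_eq' T x (fun _ => (1:ℚ)),
        Finset.sum_ite_eq' (Icc 1 m \ S) x (fun _ => (1:ℚ)),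
        if_pos hxT, if_pos (mem_sdiff.mpr ⟨hT hxT, hxS⟩)]
  · rw [Finset.sum_eq_zero, Finset.sum_eq_zero]
    · intro i hi
      rw [if_neg]
      intro he
      have hiS : i ∉ S := (mem_sdiff.mp hi).2
      exact hsub ⟨he ▸ subset_insert i S, by rw [← he, card_insert_of_notMem hiS]⟩
    · intro j hj
      rw [if_neg]
      intro he
      have h1 : T.card ≥ 1 := card_pos.mpr ⟨j, hj⟩
      have h2 : S.card = T.card - 1 := by rw [← he, card_erase_of_mem hj]
      exact hsub ⟨he ▸ erase_subset j T, by omega⟩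

lemma adj_basis (m : ℕ) (T S : Finset ℕ) (hT : T ⊆ Icc 1 m) :
    dot (Dmap (eV T)) (eV S) = dot (eV T) (Umap m (eV S)) := by
  have L : dot (Dmap (eV T)) (eV S) = ∑ j ∈ T, (if T.erase j = S then (1:ℚ) else 0) := by
    rw [Dmap_eV, Dvec, dot_sum_left]
    exact Finset.sum_congr rfl fun j _ => by rw [dot_eV_eV, if_congr eq_comm rfl rfl]
  have R : dot (eV T) (Umap m (eV S))
      = ∑ i ∈ Icc 1 m \ S, (if insert i S = T then (1:ℚ) else 0) := by
    rw [Umap_eV, dot_comm, Ue, dot_sum_left]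
    exact Finset.sum_congr rfl fun i _ => by rw [dot_eV_eV, if_congr eq_comm rfl rfl]
  rw [L, R]
  exact key_count m T S hT

lemma dot_zero_left (g : FV) : dot 0 g = 0 := by
  rw [dot, Finsupp.sum_zero_index]

lemma dot_zero_right (f : FV) : dot f 0 = 0 := by
  rw [dot_comm, dot_zero_left]

lemma dot_add_right (f g h : FV) : dot f (g + h) = dot f g + dot f h := by
  rw [dot_comm, dot_add_left, dot_comm g f, dot_comm h f]

lemma dot_smul_right (c : ℚ) (f g : FV) : dot f (c • g) = c * dot f g := by
  rw [dot_comm, dot_smul_left, dot_comm]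

def WIcc (m : ℕ) : Submodule ℚ FV := Submodule.span ℚ {f | ∃ T, T ⊆ Icc 1 m ∧ f = eV T}

lemma single_eq_smul_eV (a : Finset ℕ) (b : ℚ) : (Finsupp.single a b : FV) = b • eV a := by
  rw [eV, Finsupp.smul_single, smul_eq_mul, mul_one]

lemma adj_single (m : ℕ) (T : Finset ℕ) (hT : T ⊆ Icc 1 m) (v : FV) :
    dot (Dmap (eV T)) v = dot (eV T) (Umap m v) := by
  induction v using Finsupp.induction_linear with
  | zero => rw [map_zero, dot_zero_right, dot_zero_right]
  | add f g hf hg => rw [map_add, dot_add_right, dot_add_right, hf, hg]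
  | single a b =>
      rw [single_eq_smul_eV, map_smul, dot_smul_right, dot_smul_right, adj_basis m T a hT]

lemma adj (m : ℕ) {w : FV} (hw : w ∈ WIcc m) (v : FV) :
    dot (Dmap w) v = dot w (Umap m v) := by
  induction hw using Submodule.span_induction with
  | mem x hx => obtain ⟨T, hT, rfl⟩ := hx; exact adj_single m T hT v
  | zero => rw [map_zero, dot_zero_left, dot_zero_left]
  | add x y hx hy ihx ihy => rw [map_add, dot_add_left, dot_add_left, ihx, ihy]
  | smul c x hx ih => rw [map_smul, dot_smul_left, dot_smul_left, ih]

lemma comm_basis (m : ℕ) {S : Finset ℕ} (hS : S ⊆ Icc 1 m) :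
    Umap m (Dmap (eV S)) = Dmap (Umap m (eV S)) + (2 * (S.card : ℚ) - m) • eV S := by
  have hScard : S.card ≤ m := by
    have := card_le_card hS
    simpa [Nat.card_Icc] using this
  have hL : Umap m (Dmap (eV S)) = S.card • eV S +
      ∑ j ∈ S, ∑ i ∈ Icc 1 m \ S, eV (insert i (S.erase j)) := by
    rw [Dmap_eV, Dvec, map_sum]
    have step : ∀ j ∈ S, Umap m (eV (S.erase j))
        = eV S + ∑ i ∈ Icc 1 m \ S, eV (insert i (S.erase j)) := by
      intro j hj
      rw [Umap_eV, Ue]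
      have hidx : Icc 1 m \ S.erase j = insert j (Icc 1 m \ S) := by
        ext x
        simp only [mem_sdiff, mem_erase, mem_insert, not_and]
        constructor
        · rintro ⟨hx, h⟩
          by_cases hxj : x = j
          · exact Or.inl hxj
          · exact Or.inr ⟨hx, fun hxS => (h hxj hxS).elim⟩
        · rintro (rfl | ⟨hx, hxS⟩)
          · exact ⟨hS hj, fun h => (h rfl).elim⟩
          · exact ⟨hx, fun _ hm => hxS hm⟩
      have hjni : j ∉ Icc 1 m \ S := by
        simp only [mem_sdiff, mem_Icc, not_and, not_not]
        exact fun _ => hj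
      rw [hidx, Finset.sum_insert hjni, insert_erase hj]
    rw [Finset.sum_congr rfl step, Finset.sum_add_distrib, Finset.sum_const]
  have hR : Dmap (Umap m (eV S)) = (Icc 1 m \ S).card • eV S +
      ∑ j ∈ S, ∑ i ∈ Icc 1 m \ S, eV (insert i (S.erase j)) := by
    rw [Umap_eV, Ue, map_sum]
    have step : ∀ i ∈ Icc 1 m \ S, Dmap (eV (insert i S))
        = eV S + ∑ j ∈ S, eV (insert i (S.erase j)) := by
      intro i hi
      have hiS : i ∉ S := (mem_sdiff.mp hi).2
      rw [Dmap_eV, Dvec, Finset.sum_insert hiS, erase_insert hiS]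
      congr 1
      refine Finset.sum_congr rfl fun j hj => ?_
      rw [erase_insert_of_ne (fun h => hiS (by rw [h]; exact hj))]
    rw [Finset.sum_congr rfl step, Finset.sum_add_distrib, Finset.sum_const, Finset.sum_comm]
  rw [hL, hR, card_sdiff_of_subset hS, Nat.card_Icc]
  have hm : m + 1 - 1 - S.card = m - S.card := by omega
  rw [hm, ← Nat.cast_smul_eq_nsmul ℚ S.card, ← Nat.cast_smul_eq_nsmul ℚ (m - S.card),
      Nat.cast_sub hScard]
  module

def lev (m l : ℕ) : Set FV := {f | ∃ S : Finset ℕ, S ⊆ Icc 1 m ∧ S.card = l ∧ f = eV S}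

def Wlev (m l : ℕ) : Submodule ℚ FV := Submodule.span ℚ (lev m l)

lemma Wlev_le_WIcc (m l : ℕ) : Wlev m l ≤ WIcc m :=
  Submodule.span_mono (by rintro f ⟨S, hS, _, rfl⟩; exact ⟨S, hS, rfl⟩)

lemma comm_lev (m l : ℕ) {v : FV} (hv : v ∈ Wlev m l) :
    Umap m (Dmap v) = Dmap (Umap m v) + (2 * (l : ℚ) - m) • v := by
  induction hv using Submodule.span_induction with
  | mem x hx =>
      obtain ⟨S, hS, hcard, rfl⟩ := hx
      rw [comm_basis m hS, hcard]
  | zero => simp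
  | add x y hx hy ihx ihy =>
      rw [map_add, map_add, ihx, ihy, map_add, map_add, smul_add]
      abel
  | smul c x hx ih =>
      rw [map_smul, map_smul, ih, map_smul, map_smul, smul_add, smul_comm]

lemma Dmap_mem_lev (m l : ℕ) {v : FV} (hv : v ∈ Wlev m (l + 1)) : Dmap v ∈ Wlev m l := by
  induction hv using Submodule.span_induction with
  | mem x hx =>
      obtain ⟨S, hS, hcard, rfl⟩ := hx
      rw [Dmap_eV, Dvec]
      refine Submodule.sum_mem _ fun j hj => Submodule.subset_span
        ⟨S.erase j, (erase_subset j S).trans hS, ?_, rfl⟩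
      rw [card_erase_of_mem hj, hcard]
      omega
  | zero => simp
  | add x y hx hy ihx ihy => rw [map_add]; exact Submodule.add_mem _ ihx ihy
  | smul c x hx ih => rw [map_smul]; exact Submodule.smul_mem _ c ih

lemma Umap_mem_lev (m l : ℕ) {v : FV} (hv : v ∈ Wlev m l) : Umap m v ∈ Wlev m (l + 1) := by
  induction hv using Submodule.span_induction with
  | mem x hx =>
      obtain ⟨S, hS, hcard, rfl⟩ := hx
      rw [Umap_eV, Ue]
      refine Submodule.sum_mem _ fun i hi => Submodule.subset_span
        ⟨insert i S, insert_subset (mem_sdiff.mp hi).1 hS, ?_, rfl⟩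
      rw [card_insert_of_notMem (mem_sdiff.mp hi).2, hcard]
  | zero => simp
  | add x y hx hy ihx ihy => rw [map_add]; exact Submodule.add_mem _ ihx ihy
  | smul c x hx ih => rw [map_smul]; exact Submodule.smul_mem _ c ih

def USet (n d : ℕ) : Set FV := {f | ∃ T : Finset ℕ, T ⊆ Icc 1 n ∧ T.card + 1 = d ∧ f = Ue n T}

lemma surjU (m l : ℕ) (hml : m < 2 * l) {S : Finset ℕ} (hS : S ⊆ Icc 1 m)
    (hcard : S.card = l) : eV S ∈ Submodule.span ℚ (USet m l) := by
  obtain ⟨l', rfl⟩ : ∃ l', l = l' + 1 := ⟨l - 1, by omega⟩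
  set E : FV →ₗ[ℚ] FV := Umap m ∘ₗ Dmap with hE
  have hmap : ∀ x ∈ Wlev m (l' + 1), E x ∈ Wlev m (l' + 1) :=
    fun x hx => Umap_mem_lev m l' (Dmap_mem_lev m l' hx)
  haveI : FiniteDimensional ℚ (Wlev m (l' + 1)) := by
    apply FiniteDimensional.span_of_finite
    have hsub : lev m (l' + 1) ⊆ eV '' {S : Finset ℕ | S ∈ (Icc 1 m).powerset} := by
      rintro f ⟨A, hA, _, rfl⟩
      exact ⟨A, by simpa [Finset.mem_powerset] using hA, rfl⟩
    exact Set.Finite.subset (Set.Finite.image _ ((Icc 1 m).powerset.finite_toSet)) hsub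
  set E' := E.restrict hmap with hE'
  have hinj : Function.Injective E' := by
    rw [injective_iff_map_eq_zero]
    intro x hx0
    by_contra hne
    have hxne : (x : FV) ≠ 0 := fun h => hne (Subtype.ext h)
    have h1 : Umap m (Dmap (x : FV)) = 0 := congrArg Subtype.val hx0
    have h3 : dot (Umap m (Dmap (x : FV))) (x : FV) = 0 := by rw [h1, dot_zero_left]
    rw [comm_lev m (l' + 1) x.2, dot_add_left, dot_smul_left] at h3
    have h4 : dot (Dmap (Umap m (x : FV))) (x : FV)
        = dot (Umap m (x : FV)) (Umap m (x : FV)) :=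
      adj m (Wlev_le_WIcc m (l' + 1 + 1) (Umap_mem_lev m (l' + 1) x.2)) (x : FV)
    rw [h4] at h3
    have h5 : 0 < 2 * ((l' + 1 : ℕ) : ℚ) - m := by
      have : (m : ℚ) < 2 * ((l' + 1 : ℕ) : ℚ) := by exact_mod_cast hml
      linarith
    have h6 := dot_self_pos (x : FV) hxne
    have h7 := dot_self_nonneg (Umap m (x : FV))
    nlinarith
  have hsurj := LinearMap.injective_iff_surjective.mp hinj
  obtain ⟨w, hw⟩ := hsurj ⟨eV S, Submodule.subset_span ⟨S, hS, hcard, rfl⟩⟩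
  have hEw : Umap m (Dmap (w : FV)) = eV S := congrArg Subtype.val hw
  have hDw : Dmap (w : FV) ∈ Wlev m l' := Dmap_mem_lev m l' w.2
  have hgen : ∀ u, u ∈ Wlev m l' → Umap m u ∈ Submodule.span ℚ (USet m (l' + 1)) := by
    intro u hu
    induction hu using Submodule.span_induction with
    | mem x hx =>
        obtain ⟨T, hT, hTc, rfl⟩ := hx
        rw [Umap_eV]
        exact Submodule.subset_span ⟨T, hT, by rw [hTc], rfl⟩
    | zero => simp
    | add x y hx hy ihx ihy => rw [map_add]; exact Submodule.add_mem _ ihx ihy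
    | smul c x hx ih => rw [map_smul]; exact Submodule.smul_mem _ c ih
  rw [← hEw]
  exact hgen _ hDw

def isGoodF (S : Finset ℕ) : Prop := ∀ j ∈ S, 2 * (S.filter fun a => a ≤ j).card ≤ j

def GoodSet (n d : ℕ) : Set FV :=
  {f | ∃ G : Finset ℕ, G ⊆ Icc 1 n ∧ G.card = d ∧ isGoodF G ∧ f = eV G}

theorem comb (n : ℕ) : ∀ (d : ℕ) (S : Finset ℕ), 2 * d ≤ n → S ⊆ Icc 1 n → S.card = d →
    eV S ∈ Submodule.span ℚ (GoodSet n d ∪ USet n d) := by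
  induction n with
  | zero =>
      intro d S hd hS hcard
      have hd0 : d = 0 := by omega
      have hSe : S = ∅ := by
        rw [← Finset.card_eq_zero, hcard, hd0]
      subst hSe
      exact Submodule.subset_span (Or.inl ⟨∅, by simp, by simpa using hcard,
        fun j hj => absurd hj (notMem_empty j), rfl⟩)
  | succ n ih =>
      intro d S hd hS hcard
      by_cases hd0 : d = 0
      · subst hd0
        have hSe : S = ∅ := Finset.card_eq_zero.mp hcard
        subst hSe
        exact Submodule.subset_span (Or.inl ⟨∅, by simp, by simp,
          fun j hj => absurd hj (notMem_empty j), rfl⟩)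
      have hd1 : 1 ≤ d := by omega
      -- Case 1: sets containing n+1
      have case1 : ∀ A : Finset ℕ, A ⊆ Icc 1 (n + 1) → A.card = d → (n + 1) ∈ A →
          eV A ∈ Submodule.span ℚ (GoodSet (n + 1) d ∪ USet (n + 1) d) := by
        intro A hA hAcard hmem
        set A' := A.erase (n + 1) with hA'def
        have hA' : A' ⊆ Icc 1 n := by
          intro x hx
          obtain ⟨hxne, hxA⟩ := mem_erase.mp hx
          have := mem_Icc.mp (hA hxA)
          exact mem_Icc.mpr ⟨this.1, by omega⟩
        have hA'card : A'.card = d - 1 := by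
          rw [hA'def, card_erase_of_mem hmem, hAcard]
        have hmain := ih (d - 1) A' (by omega) hA' hA'card
        set φ : FV →ₗ[ℚ] FV := Finsupp.lmapDomain ℚ ℚ (insert (n + 1)) with hφdef
        have hφ_eV : ∀ B : Finset ℕ, φ (eV B) = eV (insert (n + 1) B) := by
          intro B
          simp only [hφdef, eV, Finsupp.lmapDomain_apply, Finsupp.mapDomain_single]
        have hφS : φ (eV A') = eV A := by
          rw [hφ_eV, hA'def, insert_erase hmem]
        have hφspan : φ (eV A') ∈
            Submodule.map φ (Submodule.span ℚ (GoodSet n (d - 1) ∪ USet n (d - 1))) :=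
          Submodule.mem_map_of_mem hmain
        rw [Submodule.map_span] at hφspan
        rw [← hφS]
        refine Submodule.span_le.mpr ?_ hφspan
        rintro f ⟨g, hg | hg, rfl⟩
        · obtain ⟨G, hG, hGc, hGgood, rfl⟩ := hg
          have hGn : (n + 1) ∉ G := fun hmem' => by
            have := mem_Icc.mp (hG hmem'); omega
          have hGle : ∀ a ∈ G, a ≤ n := fun a ha => (mem_Icc.mp (hG ha)).2
          apply Submodule.subset_span
          left
          refine ⟨insert (n + 1) G, ?_, ?_, ?_, (hφ_eV G)⟩
          · exact insert_subset (mem_Icc.mpr ⟨by omega, le_refl _⟩)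
              (hG.trans (Icc_subset_Icc_right (by omega)))
          · rw [card_insert_of_notMem hGn, hGc]; omega
          · intro j hj
            rcases mem_insert.mp hj with rfl | hjG
            · have hfil : (insert (n + 1) G).filter (fun a => a ≤ n + 1)
                  = insert (n + 1) G := by
                refine filter_true_of_mem fun a ha => ?_
                rcases mem_insert.mp ha with rfl | haG
                · exact le_refl _
                · exact (hGle a haG).trans (by omega)
              rw [hfil, card_insert_of_notMem hGn, hGc]
              omega
            · have hjn : j ≤ n := hGle j hjG
              have hfil : (insert (n + 1) G).filter (fun a => a ≤ j)
                  = G.filter (fun a => a ≤ j) := by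
                rw [filter_insert, if_neg (by omega)]
              rw [hfil]
              exact hGgood j hjG
        · obtain ⟨T, hT, hTc, rfl⟩ := hg
          have hTn : (n + 1) ∉ T := fun hmem' => by
            have := mem_Icc.mp (hT hmem'); omega
          apply Submodule.subset_span
          right
          refine ⟨insert (n + 1) T, insert_subset (mem_Icc.mpr ⟨by omega, le_refl _⟩)
            (hT.trans (Icc_subset_Icc_right (by omega))), ?_, ?_⟩
          · rw [card_insert_of_notMem hTn]; omega
          · rw [Ue, map_sum, Ue]
            have hidx : Icc 1 (n + 1) \ insert (n + 1) T = Icc 1 n \ T := by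
              ext x
              simp only [mem_sdiff, mem_Icc, mem_insert, not_or]
              constructor
              · rintro ⟨⟨h1, h2⟩, h3, h4⟩
                exact ⟨⟨h1, by omega⟩, h4⟩
              · rintro ⟨⟨h1, h2⟩, h3⟩
                exact ⟨⟨h1, by omega⟩, by omega, h3⟩
            rw [hidx]
            refine Finset.sum_congr rfl fun i hi => ?_
            rw [hφ_eV, Finset.insert_comm]
      -- helper: old Ue's are in the new span
      have caseU : ∀ T : Finset ℕ, T ⊆ Icc 1 n → T.card + 1 = d →
          Ue n T ∈ Submodule.span ℚ (GoodSet (n + 1) d ∪ USet (n + 1) d) := by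
        intro T hT hTc
        have hTn : (n + 1) ∉ T := fun hmem' => by
          have := mem_Icc.mp (hT hmem'); omega
        have hsplit : Ue (n + 1) T = eV (insert (n + 1) T) + Ue n T := by
          rw [Ue, Ue]
          have hidx : Icc 1 (n + 1) \ T = insert (n + 1) (Icc 1 n \ T) := by
            ext x
            simp only [mem_sdiff, mem_Icc, mem_insert]
            constructor
            · rintro ⟨⟨h1, h2⟩, h3⟩
              by_cases hx : x = n + 1
              · exact Or.inl hx
              · exact Or.inr ⟨⟨h1, by omega⟩, h3⟩
            · rintro (rfl | ⟨⟨h1, h2⟩, h3⟩)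
              · exact ⟨⟨by omega, le_refl _⟩, hTn⟩
              · exact ⟨⟨h1, by omega⟩, h3⟩
          rw [hidx, Finset.sum_insert (by simp)]
        have h1 : Ue (n + 1) T ∈ Submodule.span ℚ (GoodSet (n + 1) d ∪ USet (n + 1) d) :=
          Submodule.subset_span (Or.inr ⟨T, hT.trans (Icc_subset_Icc_right (by omega)), hTc, rfl⟩)
        have h2 : eV (insert (n + 1) T) ∈
            Submodule.span ℚ (GoodSet (n + 1) d ∪ USet (n + 1) d) := by
          refine case1 _ (insert_subset (mem_Icc.mpr ⟨by omega, le_refl _⟩)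
            (hT.trans (Icc_subset_Icc_right (by omega)))) ?_ (mem_insert_self _ _)
          rw [card_insert_of_notMem hTn]; omega
        have heq : Ue n T = Ue (n + 1) T - eV (insert (n + 1) T) := by
          rw [hsplit]; abel
        rw [heq]
        exact Submodule.sub_mem _ h1 h2
      by_cases hmem : (n + 1) ∈ S
      · exact case1 S hS hcard hmem
      · have hS' : S ⊆ Icc 1 n := by
          intro x hx
          have h1 := mem_Icc.mp (hS hx)
          have hxne : x ≠ n + 1 := fun h => hmem (h ▸ hx)
          exact mem_Icc.mpr ⟨h1.1, by omega⟩
        by_cases h2 : 2 * d ≤ n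
        · have hmain := ih d S h2 hS' hcard
          refine Submodule.span_le.mpr ?_ hmain
          rintro f (⟨G, hG, hGc, hGg, rfl⟩ | ⟨T, hT, hTc, rfl⟩)
          · exact Submodule.subset_span
              (Or.inl ⟨G, hG.trans (Icc_subset_Icc_right (by omega)), hGc, hGg, rfl⟩)
          · exact caseU T hT hTc
        · have hsur := surjU n d (by omega) hS' hcard
          refine Submodule.span_le.mpr ?_ hsur
          rintro f ⟨T, hT, hTc, rfl⟩
          exact caseU T hT hTc


def mon (n : ℕ) (M : Multiset ℕ) : MvPolynomial (Fin (n + 1)) ℚ := (M.map (xP n)).prod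

def xsF (n : ℕ) (S : Finset ℕ) : MvPolynomial (Fin (n + 1)) ℚ := ∏ j ∈ S, xP n j

lemma xsF_eq_mon (n : ℕ) (S : Finset ℕ) : xsF n S = mon n S.val := rfl

lemma mon_cons (n : ℕ) (a : ℕ) (M : Multiset ℕ) :
    mon n (a ::ₘ M) = xP n a * mon n M := by
  rw [mon, Multiset.map_cons, Multiset.prod_cons]; rfl

def LS (n k : ℕ) : Submodule ℚ (MvPolynomial (Fin (n + 1)) ℚ) :=
  Submodule.span ℚ {p | ∃ (b : ℕ) (S : Finset ℕ), goodS n k S ∧ p = tP n ^ b * xsF n S}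

def JS (n k : ℕ) : Submodule ℚ (MvPolynomial (Fin (n + 1)) ℚ) :=
  Submodule.restrictScalars ℚ (Iid n k) ⊔ LS n k

lemma mem_JS_of_mem_Iid {n k : ℕ} {p : MvPolynomial (Fin (n + 1)) ℚ} (hp : p ∈ Iid n k) :
    p ∈ JS n k := Submodule.mem_sup_left hp

lemma LS_le_JS (n k : ℕ) : LS n k ≤ JS n k := le_sup_right

lemma mul_tP_mem_LS {n k : ℕ} {p : MvPolynomial (Fin (n + 1)) ℚ} (hp : p ∈ LS n k) :
    tP n * p ∈ LS n k := by
  induction hp using Submodule.span_induction with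
  | mem x hx =>
      obtain ⟨b, S, hgood, rfl⟩ := hx
      exact Submodule.subset_span ⟨b + 1, S, hgood, by ring⟩
  | zero => rw [mul_zero]; exact Submodule.zero_mem _
  | add x y hx hy ihx ihy => rw [mul_add]; exact Submodule.add_mem _ ihx ihy
  | smul c x hx ih => rw [mul_smul_comm]; exact Submodule.smul_mem _ c ih

lemma mul_tP_mem_JS {n k : ℕ} {p : MvPolynomial (Fin (n + 1)) ℚ} (hp : p ∈ JS n k) :
    tP n * p ∈ JS n k := by
  obtain ⟨a, ha, b, hb, rfl⟩ := Submodule.mem_sup.mp hp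
  rw [mul_add]
  exact Submodule.add_mem _
    (Submodule.mem_sup_left (Ideal.mul_mem_left _ _ ha))
    (Submodule.mem_sup_right (mul_tP_mem_LS hb))

lemma smulC_mem_JS {n k : ℕ} (c : ℚ) {p : MvPolynomial (Fin (n + 1)) ℚ} (hp : p ∈ JS n k) :
    MvPolynomial.C c * p ∈ JS n k := by
  rw [← MvPolynomial.smul_eq_C_mul]; exact Submodule.smul_mem _ c hp

lemma goodS_empty (n k : ℕ) : goodS n k ∅ :=
  ⟨Finset.empty_subset _, by simp, by simp⟩

lemma one_mem_LS (n k : ℕ) : (1 : MvPolynomial (Fin (n + 1)) ℚ) ∈ LS n k :=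
  Submodule.subset_span ⟨0, ∅, goodS_empty n k, by simp [xsF]⟩

lemma gen1_mem (n k : ℕ) :
    (∑ i ∈ Finset.Icc 1 n, xP n i) -
      MvPolynomial.C (((n : ℚ) * ((n : ℚ) + 1)) / 2) * tP n ∈ Iid n k :=
  Ideal.subset_span (Or.inl (Or.inl rfl))

lemma gen2_mem (n k : ℕ) (i : ℕ) (h1 : 1 ≤ i) (h2 : i ≤ n) :
    (xP n i + xP n (i - 1) - MvPolynomial.C ((n : ℚ) - (k : ℚ) + (i : ℚ)) * tP n) *
      (xP n i - xP n (i - 1) - tP n) ∈ Iid n k :=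
  Ideal.subset_span (Or.inl (Or.inr ⟨i, h1, h2, rfl⟩))

lemma gen3_mem (n k : ℕ) (m : Fin (k + 1) → ℕ) (hm : StrictMono m) (h1 : 1 ≤ m 0)
    (h2 : m (Fin.last k) ≤ n) :
    (∏ j : Fin (k + 1),
      (xP n (m j) - MvPolynomial.C ((m j : ℚ) - ((j : ℕ) : ℚ)) * tP n)) ∈ Iid n k :=
  Ideal.subset_span (Or.inr ⟨m, hm, h1, h2, rfl⟩)

/-- Step B: a monomial with a repeated variable lies in `JS`. -/
lemma lemB (n k : ℕ) (D : ℕ)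
    (H1 : ∀ (b : ℕ) (M : Multiset ℕ), 1 ≤ b → b + Multiset.card M ≤ D →
      tP n ^ b * mon n M ∈ JS n k) :
    ∀ M : Multiset ℕ, Multiset.card M ≤ D → (∃ i, 2 ≤ M.count i) → mon n M ∈ JS n k := by
  suffices H : ∀ s : ℕ, ∀ M : Multiset ℕ, M.sum = s → Multiset.card M ≤ D →
      (∃ i, 2 ≤ M.count i) → mon n M ∈ JS n k by
    intro M h1 h2; exact H M.sum M rfl h1 h2
  intro s
  induction s using Nat.strong_induction_on with
  | _ s IH =>
  rintro M hsum hcard ⟨i, hi⟩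
  by_cases hir : 1 ≤ i ∧ i ≤ n
  · have him : i ∈ M := by
      rw [← Multiset.count_pos]; omega
    have him2 : i ∈ M.erase i := by
      rw [← Multiset.count_pos, Multiset.count_erase_self]; omega
    set M₀ := (M.erase i).erase i with hM₀
    have hMeq : M = i ::ₘ i ::ₘ M₀ := by
      rw [hM₀, Multiset.cons_erase him2, Multiset.cons_erase him]
    have hcard₀ : Multiset.card M₀ + 2 = Multiset.card M := by
      rw [hMeq]; simp
    have hsum₀ : M₀.sum + i + i = s := by
      rw [← hsum, hMeq]; simp [Multiset.sum_cons]; ring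
    set X := xP n i with hX
    set Y := xP n (i - 1) with hY
    set T := tP n with hT
    set Q := mon n M₀ with hQ
    set a : ℚ := (n : ℚ) - (k : ℚ) + (i : ℚ) with ha
    have hg : (X + Y - MvPolynomial.C a * T) * (X - Y - T) ∈ Iid n k :=
      gen2_mem n k i hir.1 hir.2
    have hkey : mon n M = mon n ((i - 1) ::ₘ (i - 1) ::ₘ M₀)
        + ((X + Y - MvPolynomial.C a * T) * (X - Y - T)) * Q
        + ((T * (X * Q)) + MvPolynomial.C a * (T * (X * Q))
          + ((T * (Y * Q)) - MvPolynomial.C a * (T * (Y * Q)))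
          - MvPolynomial.C a * (T * (T * Q))) := by
      rw [hMeq, mon_cons, mon_cons, mon_cons, mon_cons, ← hX, ← hY, ← hQ]
      ring
    rw [hkey]
    have hrec : mon n ((i - 1) ::ₘ (i - 1) ::ₘ M₀) ∈ JS n k := by
      refine IH (s - 2) (by omega) _ (by simp [Multiset.sum_cons]; omega)
        (by simp; omega) ⟨i - 1, ?_⟩
      rw [Multiset.count_cons_self, Multiset.count_cons_self]
      omega
    have hTXQ : T * (X * Q) ∈ JS n k := by
      have : T * (X * Q) = tP n ^ 1 * mon n (i ::ₘ M₀) := by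
        rw [pow_one, mon_cons, ← hX, ← hQ, ← hT]
      rw [this]
      refine H1 1 _ le_rfl ?_
      simp only [Multiset.card_cons]; omega
    have hTYQ : T * (Y * Q) ∈ JS n k := by
      have : T * (Y * Q) = tP n ^ 1 * mon n ((i - 1) ::ₘ M₀) := by
        rw [pow_one, mon_cons, ← hY, ← hQ, ← hT]
      rw [this]
      refine H1 1 _ le_rfl ?_
      simp only [Multiset.card_cons]; omega
    have hTTQ : T * (T * Q) ∈ JS n k := by
      have : T * (T * Q) = tP n ^ 2 * mon n M₀ := by
        rw [← hT, ← hQ]; ring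
      rw [this]
      refine H1 2 _ (by omega) (by omega)
    refine Submodule.add_mem _ (Submodule.add_mem _ hrec
      (Submodule.mem_sup_left (Ideal.mul_mem_right _ _ hg))) ?_
    refine Submodule.sub_mem _ (Submodule.add_mem _
      (Submodule.add_mem _ hTXQ (smulC_mem_JS a hTXQ)) ?_) (smulC_mem_JS a hTTQ)
    exact Submodule.sub_mem _ hTYQ (smulC_mem_JS a hTYQ)
  · have him : i ∈ M := by rw [← Multiset.count_pos]; omega
    have hx : xP n i = 0 := dif_neg hir
    have : mon n M = 0 :=
      Multiset.prod_eq_zero (Multiset.mem_map.mpr ⟨i, him, hx⟩)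
    rw [this]; exact Submodule.zero_mem _

/-- Step C: a squarefree monomial with at least `k+1` variables lies in `JS`. -/
lemma lemC (n k : ℕ) (D : ℕ)
    (H1 : ∀ (b : ℕ) (M : Multiset ℕ), 1 ≤ b → b + Multiset.card M ≤ D →
      tP n ^ b * mon n M ∈ JS n k) :
    ∀ S : Finset ℕ, S ⊆ Finset.Icc 1 n → k + 1 ≤ S.card → S.card ≤ D →
      xsF n S ∈ JS n k := by
  intro S hS hk1 hD
  obtain ⟨S₀, hS₀S, hS₀c⟩ := Finset.exists_subset_card_eq hk1
  set mf := S₀.orderEmbOfFin hS₀c with hmfdef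
  have hmem : ∀ j, mf j ∈ S₀ := fun j => Finset.orderEmbOfFin_mem _ _ _
  have hIcc : ∀ j, mf j ∈ Finset.Icc 1 n := fun j => hS (hS₀S (hmem j))
  set c : Fin (k + 1) → ℚ := fun j => ((mf j : ℚ) - ((j : ℕ) : ℚ)) with hcdef
  set g := ∏ j : Fin (k + 1), (xP n (mf j) - MvPolynomial.C (c j) * tP n) with hgdef
  have hg : g ∈ Iid n k :=
    gen3_mem n k (fun j => mf j) mf.strictMono
      (Finset.mem_Icc.mp (hIcc 0)).1 (Finset.mem_Icc.mp (hIcc (Fin.last k))).2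
  set F : Finset (Fin (k + 1)) → MvPolynomial (Fin (n + 1)) ℚ := fun u =>
    (∏ j ∈ u, xP n (mf j)) *
      (MvPolynomial.C (∏ j ∈ Finset.univ \ u, (-(c j))) *
        tP n ^ (Finset.univ \ u).card) with hFdef
  have hgF : g = ∑ u ∈ (Finset.univ : Finset (Fin (k + 1))).powerset, F u := by
    rw [hgdef]
    simp only [sub_eq_add_neg]
    rw [Finset.prod_add]
    refine Finset.sum_congr rfl fun u _ => ?_
    rw [hFdef]
    simp only [sub_eq_add_neg]
    congr 1
    have hstep : ∀ j ∈ Finset.univ \ u, -(MvPolynomial.C (c j) * tP n)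
        = MvPolynomial.C (-(c j)) * tP n := by
      intro j _
      rw [map_neg, neg_mul]
    rw [Finset.prod_congr rfl hstep, Finset.prod_mul_distrib, Finset.prod_const, map_prod]
  have htop : F Finset.univ = xsF n S₀ := by
    rw [hFdef]
    simp only [Finset.sdiff_self, Finset.prod_empty, Finset.card_empty, pow_zero, map_one,
      one_mul, mul_one]
    have himg : Finset.image (fun j => mf j) Finset.univ = S₀ := by
      ext x
      simp only [Finset.mem_image, Finset.mem_univ, true_and]
      constructor
      · rintro ⟨j, rfl⟩; exact hmem j
      · intro hx
        have hr : x ∈ Set.range mf := by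
          rw [Finset.range_orderEmbOfFin S₀ hS₀c]; exact hx
        obtain ⟨j, hj⟩ := hr
        exact ⟨j, hj⟩
    rw [xsF, ← himg, Finset.prod_image (fun a _ b _ h => mf.injective h)]
  have hS₀split : xsF n S₀ = g - ∑ u ∈ (Finset.univ :
      Finset (Fin (k + 1))).powerset.erase Finset.univ, F u := by
    rw [hgF, ← Finset.add_sum_erase _ F (Finset.mem_powerset_self _), htop]
    ring
  have hsplit : xsF n S = xsF n (S \ S₀) * xsF n S₀ := (Finset.prod_sdiff hS₀S).symm
  rw [hsplit, hS₀split, mul_sub, Finset.mul_sum]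
  refine Submodule.sub_mem _
    (Submodule.mem_sup_left (Ideal.mul_mem_left _ _ hg))
    (Submodule.sum_mem _ fun u hu => ?_)
  have hune : u ≠ Finset.univ := (Finset.mem_erase.mp hu).1
  have hue : (Finset.univ \ u).Nonempty := by
    rw [Finset.sdiff_nonempty]
    intro hle
    exact hune (Finset.eq_univ_iff_forall.mpr fun x => hle (Finset.mem_univ x))
  have hcard_u : (Finset.univ \ u).card = (k + 1) - u.card := by
    rw [Finset.card_sdiff_of_subset (Finset.subset_univ u), Finset.card_fin]
  have hucard : u.card ≤ k + 1 := by
    have := Finset.card_le_card (Finset.subset_univ u)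
    rwa [Finset.card_fin] at this
  have hterm : xsF n (S \ S₀) * F u
      = MvPolynomial.C (∏ j ∈ Finset.univ \ u, (-(c j))) *
        (tP n ^ (Finset.univ \ u).card *
          mon n ((S \ S₀).val + Multiset.map (fun j => mf j) u.val)) := by
    rw [hFdef, mon, Multiset.map_add, Multiset.prod_add, Multiset.map_map]
    rw [xsF_eq_mon, mon]
    rw [show (Multiset.map (xP n ∘ fun j => mf j) u.val).prod
      = ∏ j ∈ u, xP n (mf j) from rfl]
    simp only [hcdef]
    ring
  rw [hterm]
  refine smulC_mem_JS _ (H1 _ _ ?_ ?_)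
  · have := Finset.card_pos.mpr hue
    omega
  · have h1 : Multiset.card ((S \ S₀).val + Multiset.map (fun j => mf j) u.val)
        = (S \ S₀).card + u.card := by
      rw [Multiset.card_add, Multiset.card_map]; rfl
    rw [h1, hcard_u, Finset.card_sdiff_of_subset hS₀S, hS₀c]
    omega

/-- Step D: a small squarefree monomial lies in `JS` via the combinatorial lemma. -/
lemma lemD (n k : ℕ) (h2k : 2 * k ≤ n) (D : ℕ)
    (H1 : ∀ (b : ℕ) (M : Multiset ℕ), 1 ≤ b → b + Multiset.card M ≤ D →
      tP n ^ b * mon n M ∈ JS n k)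
    (HB : ∀ M : Multiset ℕ, Multiset.card M ≤ D → (∃ i, 2 ≤ M.count i) →
      mon n M ∈ JS n k) :
    ∀ S : Finset ℕ, S ⊆ Finset.Icc 1 n → S.card ≤ k → S.card ≤ D →
      xsF n S ∈ JS n k := by
  intro S hS hk hD
  have hcomb := comb n S.card S (by omega) hS rfl
  set Ψ : FV →ₗ[ℚ] MvPolynomial (Fin (n + 1)) ℚ :=
    Finsupp.linearCombination ℚ (fun A : Finset ℕ => xsF n A) with hΨdef
  have hΨe : ∀ A : Finset ℕ, Ψ (eV A) = xsF n A := fun A => by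
    rw [hΨdef, eV, Finsupp.linearCombination_single, one_smul]
  have hspan : Ψ (eV S) ∈
      Submodule.map Ψ (Submodule.span ℚ (GoodSet n S.card ∪ USet n S.card)) :=
    Submodule.mem_map_of_mem hcomb
  rw [Submodule.map_span] at hspan
  rw [← hΨe S]
  refine Submodule.span_le.mpr ?_ hspan
  rintro f ⟨g', hg' | hg', rfl⟩
  · obtain ⟨G, hG, hGc, hGgood, rfl⟩ := hg'
    rw [hΨe]
    refine LS_le_JS n k (Submodule.subset_span ⟨0, G, ⟨hG, by omega, hGgood⟩, ?_⟩)
    rw [pow_zero, one_mul]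
  · obtain ⟨T, hT, hTc, rfl⟩ := hg'
    rw [Ue, map_sum]
    have hstep : ∀ i ∈ Finset.Icc 1 n \ T, Ψ (eV (insert i T)) = xP n i * xsF n T := by
      intro i hi
      rw [hΨe, xsF, Finset.prod_insert (fun hmem => (Finset.mem_sdiff.mp hi).2 hmem)]
      rfl
    rw [Finset.sum_congr rfl hstep, ← Finset.sum_mul]
    have hsum : (∑ i ∈ Finset.Icc 1 n \ T, xP n i)
        = (∑ i ∈ Finset.Icc 1 n, xP n i) - ∑ i ∈ T, xP n i := by
      rw [← Finset.sum_sdiff hT]; ring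
    rw [hsum, sub_mul]
    refine Submodule.sub_mem _ ?_ ?_
    · have hrw : (∑ i ∈ Finset.Icc 1 n, xP n i) * xsF n T
          = ((∑ i ∈ Finset.Icc 1 n, xP n i) -
              MvPolynomial.C (((n : ℚ) * ((n : ℚ) + 1)) / 2) * tP n) * xsF n T
            + MvPolynomial.C (((n : ℚ) * ((n : ℚ) + 1)) / 2) * (tP n * xsF n T) := by
        ring
      rw [hrw]
      refine Submodule.add_mem _
        (Submodule.mem_sup_left (Ideal.mul_mem_right _ _ (gen1_mem n k))) ?_
      refine smulC_mem_JS _ ?_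
      have : tP n * xsF n T = tP n ^ 1 * mon n T.val := by
        rw [pow_one, xsF_eq_mon]
      rw [this]
      refine H1 1 T.val le_rfl ?_
      have : Multiset.card T.val = T.card := rfl
      omega
    · rw [Finset.sum_mul]
      refine Submodule.sum_mem _ fun i hi => ?_
      have hrw : xP n i * xsF n T = mon n (i ::ₘ T.val) := by
        rw [mon_cons, xsF_eq_mon]
      rw [hrw]
      refine HB _ ?_ ⟨i, ?_⟩
      · rw [Multiset.card_cons]
        have : Multiset.card T.val = T.card := rfl
        omega
      · rw [Multiset.count_cons_self]
        have : 0 < T.val.count i := Multiset.count_pos.mpr hi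
        omega

lemma mainJ (n k : ℕ) (h2k : 2 * k ≤ n) :
    ∀ (D b : ℕ) (M : Multiset ℕ), b + Multiset.card M ≤ D →
      tP n ^ b * mon n M ∈ JS n k := by
  intro D
  induction D with
  | zero =>
      intro b M hle
      have hb : b = 0 := by omega
      have hM : M = 0 := Multiset.card_eq_zero.mp (by omega)
      subst hb; subst hM
      have : tP n ^ 0 * mon n 0 = 1 := by simp [mon]
      rw [this]
      exact LS_le_JS n k (one_mem_LS n k)
  | succ D ih =>
      have H1 : ∀ (b : ℕ) (M : Multiset ℕ), 1 ≤ b → b + Multiset.card M ≤ D + 1 →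
          tP n ^ b * mon n M ∈ JS n k := by
        intro b M hb hle
        obtain ⟨b', rfl⟩ : ∃ b', b = b' + 1 := ⟨b - 1, by omega⟩
        have : tP n ^ (b' + 1) * mon n M = tP n * (tP n ^ b' * mon n M) := by ring
        rw [this]
        exact mul_tP_mem_JS (ih b' M (by omega))
      have HB := lemB n k (D + 1) H1
      intro b M hle
      rcases Nat.eq_zero_or_pos b with rfl | hb
      · rw [pow_zero, one_mul]
        by_cases hrange : ∀ i ∈ M, 1 ≤ i ∧ i ≤ n
        · by_cases hdup : ∃ i, 2 ≤ M.count i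
          · exact HB M (by omega) hdup
          · push_neg at hdup
            have hnd : M.Nodup := by
              rw [Multiset.nodup_iff_count_le_one]
              intro a
              have := hdup a
              omega
            set S : Finset ℕ := ⟨M, hnd⟩ with hSdef
            have hSsub : S ⊆ Finset.Icc 1 n := fun x hx =>
              Finset.mem_Icc.mpr (hrange x hx)
            have hxs : mon n M = xsF n S := rfl
            have hScard : S.card = Multiset.card M := rfl
            rw [hxs]
            rcases le_or_gt S.card k with hk' | hk'
            · exact lemD n k h2k (D + 1) H1 HB S hSsub hk' (by omega)
            · exact lemC n k (D + 1) H1 S hSsub (by omega) (by omega)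
        · push_neg at hrange
          obtain ⟨i, him, hir⟩ := hrange
          have hx : xP n i = 0 := dif_neg (by omega)
          have : mon n M = 0 :=
            Multiset.prod_eq_zero (Multiset.mem_map.mpr ⟨i, him, hx⟩)
          rw [this]; exact Submodule.zero_mem _
      · exact H1 b M hb hle

lemma all_mem_JS (n k : ℕ) (h2k : 2 * k ≤ n) (f : MvPolynomial (Fin (n + 1)) ℚ) :
    f ∈ JS n k := by
  induction f using MvPolynomial.induction_on with
  | C a =>
      rw [← mul_one (MvPolynomial.C a)]
      exact smulC_mem_JS a (LS_le_JS n k (one_mem_LS n k))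
  | add p q hp hq => exact Submodule.add_mem _ hp hq
  | mul_X p i hp =>
      obtain ⟨a, ha, b, hb, rfl⟩ := Submodule.mem_sup.mp hp
      rw [add_mul]
      refine Submodule.add_mem _
        (Submodule.mem_sup_left (Ideal.mul_mem_right _ _ ha)) ?_
      have key : ∀ x ∈ LS n k, x * MvPolynomial.X i ∈ JS n k := by
        intro x hx
        induction hx using Submodule.span_induction with
        | mem y hy =>
            obtain ⟨bb, S, hgood, rfl⟩ := hy
            by_cases hi0 : i = 0
            · subst hi0
              have : tP n ^ bb * xsF n S * MvPolynomial.X 0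
                  = tP n * (tP n ^ bb * xsF n S) := by rw [tP]; ring
              rw [this]
              exact mul_tP_mem_JS (LS_le_JS n k (Submodule.subset_span ⟨bb, S, hgood, rfl⟩))
            · have hi1 : 1 ≤ (i : ℕ) := by
                rcases Nat.eq_zero_or_pos (i : ℕ) with h0 | h1
                · exact absurd (Fin.ext h0 : i = (⟨0, by omega⟩ : Fin (n + 1))) hi0
                · exact h1
              have hin : (i : ℕ) ≤ n := by omega
              have hXi : MvPolynomial.X i = xP n (i : ℕ) := by
                rw [xP, dif_pos ⟨hi1, hin⟩]
              have hrw : tP n ^ bb * xsF n S * MvPolynomial.X i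
                  = tP n ^ bb * mon n ((i : ℕ) ::ₘ S.val) := by
                rw [hXi, mon_cons, xsF_eq_mon]; ring
              rw [hrw]
              exact mainJ n k h2k (bb + Multiset.card ((i : ℕ) ::ₘ S.val)) bb _ le_rfl
        | zero => rw [zero_mul]; exact Submodule.zero_mem _
        | add x y hx hy ihx ihy => rw [add_mul]; exact Submodule.add_mem _ ihx ihy
        | smul c x hx ihx => rw [smul_mul_assoc]; exact Submodule.smul_mem _ c ihx
      exact key b hb

end

end Prop41

theorem quotient_spanned_by_tableau_monomials (n k : ℕ) (h : 2 * k ≤ n) :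
    letI : Module (Polynomial ℚ) (MvPolynomial (Fin (n + 1)) ℚ ⧸ Iid n k) :=
      Module.compHom _
        (Polynomial.aeval (Ideal.Quotient.mk (Iid n k) (tP n))).toRingHom
    Submodule.span (Polynomial ℚ)
        {q : MvPolynomial (Fin (n + 1)) ℚ ⧸ Iid n k | ∃ S : Finset ℕ, goodS n k S ∧
          q = Ideal.Quotient.mk (Iid n k) (∏ j ∈ S, xP n j)} = ⊤ := by
  letI : Module (Polynomial ℚ) (MvPolynomial (Fin (n + 1)) ℚ ⧸ Iid n k) :=
    Module.compHom _
      (Polynomial.aeval (Ideal.Quotient.mk (Iid n k) (tP n))).toRingHom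
  have hsmul : ∀ (p : Polynomial ℚ) (x : MvPolynomial (Fin (n + 1)) ℚ ⧸ Iid n k),
      p • x = Polynomial.aeval (Ideal.Quotient.mk (Iid n k) (tP n)) p * x :=
    fun p x => rfl
  have halg : ∀ c : ℚ, algebraMap ℚ (MvPolynomial (Fin (n + 1)) ℚ ⧸ Iid n k) c
      = Ideal.Quotient.mk (Iid n k) (MvPolynomial.C c) := by
    intro c
    rw [IsScalarTower.algebraMap_apply ℚ (MvPolynomial (Fin (n + 1)) ℚ)
      (MvPolynomial (Fin (n + 1)) ℚ ⧸ Iid n k), ← MvPolynomial.algebraMap_eq]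
    rfl
  rw [Submodule.eq_top_iff']
  intro q
  obtain ⟨f, rfl⟩ := Ideal.Quotient.mk_surjective q
  obtain ⟨a, ha, b, hb, hab⟩ := Submodule.mem_sup.mp (Prop41.all_mem_JS n k h f)
  have hmka : Ideal.Quotient.mk (Iid n k) a = 0 := Ideal.Quotient.eq_zero_iff_mem.mpr ha
  have hmk : Ideal.Quotient.mk (Iid n k) f = Ideal.Quotient.mk (Iid n k) b := by
    rw [← hab, map_add, hmka, zero_add]
  rw [hmk]
  clear hab hmka ha hmk
  induction hb using Submodule.span_induction with
  | mem x hx =>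
      obtain ⟨bb, S, hgood, rfl⟩ := hx
      have hrw : Ideal.Quotient.mk (Iid n k) (tP n ^ bb * Prop41.xsF n S)
          = (Polynomial.X ^ bb : Polynomial ℚ) •
              Ideal.Quotient.mk (Iid n k) (Prop41.xsF n S) := by
        rw [hsmul, map_pow, Polynomial.aeval_X, map_mul, map_pow]
      rw [hrw]
      exact Submodule.smul_mem _ _ (Submodule.subset_span ⟨S, hgood, rfl⟩)
  | zero => rw [map_zero]; exact Submodule.zero_mem _
  | add x y hx hy ihx ihy => rw [map_add]; exact Submodule.add_mem _ ihx ihy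
  | smul c x hx ihx =>
      have hrw : Ideal.Quotient.mk (Iid n k) (c • x)
          = (Polynomial.C c : Polynomial ℚ) • Ideal.Quotient.mk (Iid n k) x := by
        rw [hsmul, Polynomial.aeval_C, halg, MvPolynomial.smul_eq_C_mul, map_mul]
      rw [hrw]
      exact Submodule.smul_mem _ _ ihx
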